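/- Let n = 2, with x_1 < x_2 real and m_1, m_2 real. Set E_{12} = e^{−(x_2−x_1)}. Define H_1 = m_1² + m_2² + 2m_1m_2E_{12} and H_2 = (1 − E_{12}²) m_1² m_2². If (x_1, x_2, m_1, m_2) solve the ODEs ẋ_k = u(x_k)², ṁ_k = −m_k u(x_k)⟨u_x(x_k)⟩ where u(x) = m_1 e^{−|x−x_1|} + m_2 e^{−|x−x_2|} and ⟨u_x(x_k)⟩ is the average of left and right derivatives, then dH_1/dt = 0 and dH_2/dt = 0. -/

import Mathlib

/-- The quantities `H₁ = m₁² + m₂² + 2m₁m₂E₁₂` and `H₂ = (1 - E₁₂²)m₁²m₂²` are conserved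
along the two-peakon flow of Novikov's equation. -/
theorem two_peakon_constants_of_motion
    (x1 x2 m1 m2 : ℝ → ℝ)
    (hord : ∀ t, x1 t < x2 t)
    (hx1 : ∀ t, HasDerivAt x1 ((m1 t + m2 t * Real.exp (x1 t - x2 t)) ^ 2) t)
    (hx2 : ∀ t, HasDerivAt x2 ((m1 t * Real.exp (x1 t - x2 t) + m2 t) ^ 2) t)
    (hm1 : ∀ t, HasDerivAt m1
      (-(m1 t * (m1 t + m2 t * Real.exp (x1 t - x2 t)) *
         (m2 t * Real.exp (x1 t - x2 t)))) t)
    (hm2 : ∀ t, HasDerivAt m2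
      (m2 t * (m1 t * Real.exp (x1 t - x2 t) + m2 t) *
        (m1 t * Real.exp (x1 t - x2 t))) t) :
    (∀ t, HasDerivAt (fun t =>
      (m1 t) ^ 2 + (m2 t) ^ 2 + 2 * m1 t * m2 t * Real.exp (x1 t - x2 t)) 0 t) ∧
    (∀ t, HasDerivAt (fun t =>
      (1 - (Real.exp (x1 t - x2 t)) ^ 2) * (m1 t) ^ 2 * (m2 t) ^ 2) 0 t) := by
  have hE : ∀ t, HasDerivAt (fun t => Real.exp (x1 t - x2 t))
      (Real.exp (x1 t - x2 t) *
        ((m1 t + m2 t * Real.exp (x1 t - x2 t)) ^ 2 -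
         (m1 t * Real.exp (x1 t - x2 t) + m2 t) ^ 2)) t := by
    intro t
    exact ((hx1 t).sub (hx2 t)).exp
  constructor
  · intro t
    have h : HasDerivAt (fun t =>
        (m1 t) ^ 2 + (m2 t) ^ 2 + 2 * m1 t * m2 t * Real.exp (x1 t - x2 t)) _ t :=
      (((hm1 t).pow 2).add ((hm2 t).pow 2)).add
      ((((hasDerivAt_const t (2 : ℝ)).mul (hm1 t)).mul (hm2 t)).mul (hE t))
    convert h using 1
    simp only [Pi.mul_apply, Pi.pow_apply, Pi.sub_apply, Pi.add_apply]
    ring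
  · intro t
    have h : HasDerivAt (fun t =>
        (1 - (Real.exp (x1 t - x2 t)) ^ 2) * (m1 t) ^ 2 * (m2 t) ^ 2) _ t :=
      (((hasDerivAt_const t (1 : ℝ)).sub ((hE t).pow 2)).mul
      ((hm1 t).pow 2)).mul ((hm2 t).pow 2)
    convert h using 1
    simp only [Pi.mul_apply, Pi.pow_apply, Pi.sub_apply, Pi.add_apply]
    ring
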